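/- Let b, μ₁, μ₂, a > 0 with N := b/μ₁ > 1, Q := μ₁/μ₂, and 0 < a < a_crit := Q(√N − 1)². Then for the ODE x' = x(b·x/(x+a) − μ₁ − μ₂x), the two positive equilibria x₋ < x₊ satisfy: every solution with initial condition in [0, x₋) converges to 0, and every solution with initial condition in (x₋, ∞) converges to x₊. -/

import Mathlib

open Filter Set intervalIntegral

/-- Solutions of a linear ODE `y' = c t * y` on `[0,∞)` are `y 0 * exp (∫ c)`. -/
lemma myode_exp_sol (c y : ℝ → ℝ) (hc : Continuous c)
    (hy : ∀ t, 0 ≤ t → HasDerivAt y (c t * y t) t) :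
    ∀ t, 0 ≤ t → y t = y 0 * Real.exp (∫ s in (0:ℝ)..t, c s) := by
  set C : ℝ → ℝ := fun t => ∫ s in (0:ℝ)..t, c s with hC
  have hCd : ∀ t : ℝ, HasDerivAt C (c t) t := fun t =>
    integral_hasDerivAt_right (hc.intervalIntegrable _ _)
      (hc.stronglyMeasurableAtFilter _ _) hc.continuousAt
  set F : ℝ → ℝ := fun t => y t * Real.exp (-(C t)) with hF
  have hFd : ∀ t, 0 ≤ t → HasDerivAt F 0 t := by
    intro t ht
    have h1 := (hy t ht).mul (((hCd t).neg).exp)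
    exact h1.congr_deriv (by ring)
  intro t ht
  have key : ∀ s ∈ Icc (0:ℝ) t, F s = F 0 := by
    apply constant_of_has_deriv_right_zero
    · exact fun s hs => ((hFd s hs.1).continuousAt).continuousWithinAt
    · exact fun s hs => ((hFd s hs.1).hasDerivWithinAt)
  have hFt := key t ⟨ht, le_rfl⟩
  have hC0 : C 0 = 0 := by simp [hC]
  have h2 : y t * Real.exp (-(C t)) = y 0 := by
    simpa [hF, hC0] using hFt
  have := congrArg (fun z => z * Real.exp (C t)) h2
  simpa [mul_assoc, ← Real.exp_add] using this

/-- If `x` stays nonnegative on `[0,∞)` but its derivative tends to a negative limit, contradiction. -/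
lemma myode_no_neg_limit (x v : ℝ → ℝ) (d : ℝ)
    (hx : ∀ t, 0 ≤ t → HasDerivAt x (v t) t)
    (hv : Tendsto v atTop (nhds d)) (hd : d < 0)
    (hnn : ∀ t, 0 ≤ t → 0 ≤ x t) : False := by
  have hev : ∀ᶠ t in atTop, v t ≤ d / 2 :=
    hv.eventually_le_const (by linarith)
  obtain ⟨T, hT⟩ := (hev.and (eventually_ge_atTop (0:ℝ))).exists_forall_of_atTop
  have hT0 : 0 ≤ T := (hT T le_rfl).2
  -- φ t = x t - (d/2) * t is antitone on [T, ∞)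
  set φ : ℝ → ℝ := fun t => x t - d / 2 * t with hφ
  have hmono : AntitoneOn φ (Ici T) := by
    apply antitoneOn_of_deriv_nonpos (convex_Ici T)
    · intro s hs
      exact (((hx s (hT0.trans hs)).sub ((hasDerivAt_id s).const_mul (d/2))).continuousAt).continuousWithinAt
    · intro s hs
      rw [interior_Ici] at hs
      exact (((hx s (hT0.trans hs.le)).sub ((hasDerivAt_id s).const_mul (d/2))).differentiableAt).differentiableWithinAt
    · intro s hs
      rw [interior_Ici] at hs
      have hds : HasDerivAt φ (v s - d / 2) s := by
        have := (hx s (hT0.trans hs.le)).sub ((hasDerivAt_id s).const_mul (d/2))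
        exact this.congr_deriv (by ring)
      rw [hds.deriv]
      have := (hT s hs.le).1
      linarith
  obtain ⟨t, htT, h3⟩ : ∃ t, T ≤ t ∧ (φ T + 1) * (2 / -d) ≤ t :=
    ⟨max (T + 1) ((φ T + 1) * (2 / -d)), le_trans (by linarith) (le_max_left _ _),
      le_max_right _ _⟩
  have h1 : x t - d / 2 * t ≤ x T - d / 2 * T := hmono (Set.mem_Ici.mpr le_rfl) htT htT
  have h2 : 0 ≤ x t := hnn t (hT0.trans htT)
  have hdpos : 0 < -d := by linarith
  have hdne : d ≠ 0 := ne_of_lt hd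
  have h7 : (2 / -d) * (-d / 2) = 1 := by field_simp
  have hphiT : φ T = x T - d / 2 * T := rfl
  have h4 : φ T + 1 ≤ t * (-d) / 2 := by
    calc φ T + 1 = (φ T + 1) * ((2 / -d) * (-d / 2)) := by rw [h7]; ring
      _ = (φ T + 1) * (2 / -d) * (-d / 2) := by ring
      _ ≤ t * (-d / 2) := mul_le_mul_of_nonneg_right h3 (by positivity)
      _ = t * (-d) / 2 := by ring
  rw [hphiT] at h4
  nlinarith [h1, h2, h4]

open Filter Set

/-- An eventually-defined antitone bounded-below trajectory converges. -/
lemma myode_tendsto_of_antitone (x : ℝ → ℝ) (m : ℝ)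
    (hmono : ∀ s t : ℝ, 0 ≤ s → s ≤ t → x t ≤ x s)
    (hm : ∀ t, 0 ≤ t → m ≤ x t) :
    ∃ L, m ≤ L ∧ (∀ t, 0 ≤ t → L ≤ x t) ∧ Tendsto x atTop (nhds L) := by
  set y : ℝ → ℝ := fun t => x (max t 0) with hy
  have hanti : Antitone y := fun s t hst =>
    hmono (max s 0) (max t 0) (le_max_right _ _) (max_le_max hst le_rfl)
  have hbdd : BddBelow (range y) := by
    refine ⟨m, fun z hz => ?_⟩
    obtain ⟨t, rfl⟩ := hz
    exact hm _ (le_max_right _ _)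
  refine ⟨⨅ t, y t, ?_, ?_, ?_⟩
  · exact le_ciInf fun t => hm _ (le_max_right _ _)
  · intro t ht
    have := ciInf_le hbdd t
    simpa [hy, max_eq_left ht] using this
  · have h1 : Tendsto y atTop (nhds (⨅ t, y t)) := tendsto_atTop_ciInf hanti hbdd
    refine h1.congr' ?_
    filter_upwards [eventually_ge_atTop (0:ℝ)] with t ht
    simp [hy, max_eq_left ht]

lemma myode_tendsto_of_monotone (x : ℝ → ℝ) (M : ℝ)
    (hmono : ∀ s t : ℝ, 0 ≤ s → s ≤ t → x s ≤ x t)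
    (hM : ∀ t, 0 ≤ t → x t ≤ M) :
    ∃ L, L ≤ M ∧ (∀ t, 0 ≤ t → x t ≤ L) ∧ Tendsto x atTop (nhds L) := by
  obtain ⟨L, h1, h2, h3⟩ := myode_tendsto_of_antitone (fun t => -x t) (-M)
    (fun s t hs hst => neg_le_neg (hmono s t hs hst)) (fun t ht => neg_le_neg (hM t ht))
  refine ⟨-L, by linarith, fun t ht => by have := h2 t ht; linarith, ?_⟩
  have := h3.neg
  simpa using this

lemma myode_antitoneOn (x v : ℝ → ℝ)
    (hx : ∀ t, 0 ≤ t → HasDerivAt x (v t) t) (hv : ∀ t, 0 ≤ t → v t ≤ 0) :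
    ∀ s t : ℝ, 0 ≤ s → s ≤ t → x t ≤ x s := by
  have h : AntitoneOn x (Ici 0) := by
    apply antitoneOn_of_deriv_nonpos (convex_Ici 0)
    · exact fun s hs => (hx s hs).continuousAt.continuousWithinAt
    · intro s hs
      rw [interior_Ici] at hs
      exact (hx s hs.le).differentiableAt.differentiableWithinAt
    · intro s hs
      rw [interior_Ici] at hs
      rw [(hx s hs.le).deriv]
      exact hv s hs.le
  exact fun s t hs hst => h hs (hs.trans hst) hst

lemma myode_monotoneOn (x v : ℝ → ℝ)
    (hx : ∀ t, 0 ≤ t → HasDerivAt x (v t) t) (hv : ∀ t, 0 ≤ t → 0 ≤ v t) :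
    ∀ s t : ℝ, 0 ≤ s → s ≤ t → x s ≤ x t := by
  have h := myode_antitoneOn (fun t => -x t) (fun t => -v t)
    (fun t ht => (hx t ht).neg) (fun t ht => neg_nonpos.mpr (hv t ht))
  exact fun s t hs hst => by have := h s t hs hst; linarith

set_option maxHeartbeats 2000000 in
/-- Basins of attraction for the scalar Allee-effect ODE when `0 < a < a_crit`:
solutions starting below the smaller positive equilibrium `x₋` converge to `0`,
those starting above `x₋` converge to the larger equilibrium `x₊`. -/
theorem stmt18 (b μ1 μ2 a : ℝ) (hb : 0 < b) (hμ1 : 0 < μ1) (hμ2 : 0 < μ2) (ha : 0 < a)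
    (hN : 1 < b / μ1) (hacrit : a < (μ1 / μ2) * (Real.sqrt (b / μ1) - 1) ^ 2)
    (xm xp : ℝ) (hxm : 0 < xm) (hlt : xm < xp)
    (hrm : xm ^ 2 / (μ1 / μ2) + (a / (μ1 / μ2) + 1 - b / μ1) * xm + a = 0)
    (hrp : xp ^ 2 / (μ1 / μ2) + (a / (μ1 / μ2) + 1 - b / μ1) * xp + a = 0)
    (x : ℝ → ℝ) (hnn : ∀ t, 0 ≤ t → 0 ≤ x t)
    (hsol : ∀ t, 0 ≤ t → HasDerivAt x (x t * (b * x t / (x t + a) - μ1 - μ2 * x t)) t) :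
    (x 0 < xm → Filter.Tendsto x Filter.atTop (nhds 0)) ∧
    (xm < x 0 → Filter.Tendsto x Filter.atTop (nhds xp)) := by
  have hxp : 0 < xp := lt_trans hxm hlt
  -- the algebraic factorization of the vector field
  have key : ∀ u : ℝ, 0 ≤ u →
      u * (b * u / (u + a) - μ1 - μ2 * u)
        = -(μ2 * u * ((u - xm) * (u - xp))) / (u + a) := by
    have h1 : μ1 ≠ 0 := ne_of_gt hμ1
    have h2 : μ2 ≠ 0 := ne_of_gt hμ2
    have hm' : μ2 * xm ^ 2 + (a * μ2 + μ1 - b) * xm + a * μ1 = 0 := by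
      field_simp at hrm
      linarith
    have hp' : μ2 * xp ^ 2 + (a * μ2 + μ1 - b) * xp + a * μ1 = 0 := by
      field_simp at hrp
      linarith
    have hfac : (xm - xp) * (μ2 * (xm + xp) + a * μ2 + μ1 - b) = 0 := by
      linear_combination hm' - hp'
    have hsum : μ2 * (xm + xp) = b - μ1 - a * μ2 := by
      rcases mul_eq_zero.mp hfac with h | h
      · exact absurd h (sub_ne_zero.mpr (ne_of_lt hlt))
      · linarith
    have hprod : μ2 * (xm * xp) = a * μ1 := by
      linear_combination xm * hsum - hm'
    intro u hu
    have hua : u + a ≠ 0 := by positivity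
    field_simp
    linear_combination (-(u ^ 2)) * hsum + u * hprod
  -- the truncated trajectory is continuous
  have hyC : Continuous (fun t : ℝ => x (max t 0)) := by
    rw [continuous_iff_continuousAt]
    intro t
    have hf : ContinuousAt (fun s : ℝ => max s 0) t :=
      (continuous_id.max continuous_const).continuousAt
    have hg : ContinuousAt x (max t 0) := (hsol _ (le_max_right t 0)).continuousAt
    exact ContinuousAt.comp hg hf
  have hden : ∀ t : ℝ, x (max t 0) + a ≠ 0 := by
    intro t
    have := hnn _ (le_max_right t 0)
    positivity
  -- derivative as continuous function along the trajectory
  have hnn' : ∀ t : ℝ, 0 ≤ t → 0 ≤ x t := hnn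
  -- linear-ODE representation for x itself
  have e0 : ∀ t, 0 ≤ t → x t = x 0 * Real.exp (∫ s in (0:ℝ)..t,
      -(μ2 * (x (max s 0) - xm) * (x (max s 0) - xp)) / (x (max s 0) + a)) := by
    apply myode_exp_sol
    · exact (((continuous_const.mul (hyC.sub continuous_const)).mul
        (hyC.sub continuous_const)).neg).div (hyC.add continuous_const) hden
    · intro t ht
      have h := hsol t ht
      convert h using 1
      rw [key (x t) (hnn t ht)]
      simp only [max_eq_left ht]
      ring
  -- linear-ODE representation for x - xm
  have e1 : ∀ t, 0 ≤ t → x t - xm = (x 0 - xm) * Real.exp (∫ s in (0:ℝ)..t,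
      -(μ2 * x (max s 0) * (x (max s 0) - xp)) / (x (max s 0) + a)) := by
    have h := myode_exp_sol
      (fun s => -(μ2 * x (max s 0) * (x (max s 0) - xp)) / (x (max s 0) + a))
      (fun s => x s - xm)
      ((((continuous_const.mul hyC).mul (hyC.sub continuous_const)).neg).div
        (hyC.add continuous_const) hden)
      (by
        intro t ht
        have h := (hsol t ht).sub_const xm
        refine h.congr_deriv ?_
        rw [key (x t) (hnn t ht)]
        simp only [max_eq_left ht]
        ring)
    simpa using h
  -- linear-ODE representation for x - xp
  have e2 : ∀ t, 0 ≤ t → x t - xp = (x 0 - xp) * Real.exp (∫ s in (0:ℝ)..t,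
      -(μ2 * x (max s 0) * (x (max s 0) - xm)) / (x (max s 0) + a)) := by
    have h := myode_exp_sol
      (fun s => -(μ2 * x (max s 0) * (x (max s 0) - xm)) / (x (max s 0) + a))
      (fun s => x s - xp)
      ((((continuous_const.mul hyC).mul (hyC.sub continuous_const)).neg).div
        (hyC.add continuous_const) hden)
      (by
        intro t ht
        have h := (hsol t ht).sub_const xp
        refine h.congr_deriv ?_
        rw [key (x t) (hnn t ht)]
        simp only [max_eq_left ht]
        ring)
    simpa using h
  -- limit of derivative along trajectory
  have hGtend : ∀ L : ℝ, 0 ≤ L → Filter.Tendsto x Filter.atTop (nhds L) →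
      Filter.Tendsto (fun t => x t * (b * x t / (x t + a) - μ1 - μ2 * x t))
        Filter.atTop (nhds (-(μ2 * L * ((L - xm) * (L - xp))) / (L + a))) := by
    intro L hL hxL
    have hLa : L + a ≠ 0 := by positivity
    have h1 : ContinuousAt (fun u : ℝ => u * (b * u / (u + a) - μ1 - μ2 * u)) L := by
      apply ContinuousAt.mul continuousAt_id
      apply ContinuousAt.sub
      apply ContinuousAt.sub
      · exact ContinuousAt.div (continuousAt_const.mul continuousAt_id)
          (continuousAt_id.add continuousAt_const) hLa
      · exact continuousAt_const
      · exact continuousAt_const.mul continuousAt_id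
    have h2 := h1.tendsto.comp hxL
    rw [key L hL] at h2
    exact h2
  constructor
  · -- x 0 < xm : converge to 0
    intro h0
    rcases eq_or_lt_of_le (hnn 0 le_rfl) with hz | hz
    · -- x 0 = 0 : identically zero
      have hzero : ∀ᶠ t in Filter.atTop, (0:ℝ) = x t := by
        filter_upwards [Filter.eventually_ge_atTop (0:ℝ)] with t ht
        rw [e0 t ht, ← hz]
        ring
      exact Filter.Tendsto.congr' hzero tendsto_const_nhds
    · -- 0 < x 0 < xm
      have hpos : ∀ t, 0 ≤ t → 0 < x t := by
        intro t ht
        rw [e0 t ht]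
        positivity
      have hltm : ∀ t, 0 ≤ t → x t < xm := by
        intro t ht
        have h := e1 t ht
        nlinarith [Real.exp_pos (∫ s in (0:ℝ)..t,
          -(μ2 * x (max s 0) * (x (max s 0) - xp)) / (x (max s 0) + a)), h]
      have hv : ∀ t, 0 ≤ t → x t * (b * x t / (x t + a) - μ1 - μ2 * x t) ≤ 0 := by
        intro t ht
        rw [key (x t) (hnn t ht)]
        apply le_of_lt
        apply div_neg_of_neg_of_pos
        · have h1 : 0 < μ2 * x t * ((xm - x t) * (xp - x t)) :=
            mul_pos (mul_pos hμ2 (hpos t ht))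
              (mul_pos (by linarith [hltm t ht]) (by linarith [hltm t ht, hlt]))
          nlinarith [h1]
        · have := hnn t ht; positivity
      have hmono := myode_antitoneOn x _ hsol hv
      obtain ⟨L, hL0, hLle, hLt⟩ := myode_tendsto_of_antitone x 0 hmono hnn
      rcases eq_or_lt_of_le hL0 with h | h
      · rwa [← h] at hLt
      · exfalso
        apply myode_no_neg_limit x _ (-(μ2 * L * ((L - xm) * (L - xp))) / (L + a))
          hsol (hGtend L h.le hLt) ?_ hnn
        have hLm : L < xm := lt_of_le_of_lt (hLle 0 le_rfl) h0
        apply div_neg_of_neg_of_pos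
        · have h1 : 0 < μ2 * L * ((xm - L) * (xp - L)) :=
            mul_pos (mul_pos hμ2 h) (mul_pos (by linarith) (by linarith))
          nlinarith [h1]
        · positivity
  · -- xm < x 0 : converge to xp
    intro h0
    have hgtm : ∀ t, 0 ≤ t → xm < x t := by
      intro t ht
      have h := e1 t ht
      nlinarith [Real.exp_pos (∫ s in (0:ℝ)..t,
        -(μ2 * x (max s 0) * (x (max s 0) - xp)) / (x (max s 0) + a)), h]
    rcases lt_trichotomy (x 0) xp with hc | hc | hc
    · -- xm < x 0 < xp : increasing towards xp
      have hltp : ∀ t, 0 ≤ t → x t < xp := by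
        intro t ht
        have h := e2 t ht
        nlinarith [Real.exp_pos (∫ s in (0:ℝ)..t,
          -(μ2 * x (max s 0) * (x (max s 0) - xm)) / (x (max s 0) + a)), h]
      have hv : ∀ t, 0 ≤ t → 0 ≤ x t * (b * x t / (x t + a) - μ1 - μ2 * x t) := by
        intro t ht
        rw [key (x t) (hnn t ht)]
        apply le_of_lt
        apply div_pos
        · have h1 : 0 < μ2 * x t * ((x t - xm) * (xp - x t)) :=
            mul_pos (mul_pos hμ2 (by linarith [hgtm t ht]))
              (mul_pos (by linarith [hgtm t ht]) (by linarith [hltp t ht]))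
          nlinarith [h1]
        · have := hnn t ht; positivity
      have hmono := myode_monotoneOn x _ hsol hv
      obtain ⟨L, hLp, hLge, hLt⟩ := myode_tendsto_of_monotone x xp hmono
        (fun t ht => le_of_lt (hltp t ht))
      rcases eq_or_lt_of_le hLp with h | h
      · rwa [h] at hLt
      · exfalso
        have hLm : xm < L := lt_of_lt_of_le h0 (hLge 0 le_rfl)
        have hL0 : 0 ≤ L := le_of_lt (lt_trans hxm hLm)
        have hder : ∀ t : ℝ, 0 ≤ t → HasDerivAt (fun s => xp - x s)
            (-(x t * (b * x t / (x t + a) - μ1 - μ2 * x t))) t := by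
          intro t ht
          have h := (hasDerivAt_const t xp).sub (hsol t ht)
          exact h.congr_deriv (by ring)
        have htend : Filter.Tendsto
            (fun t => -(x t * (b * x t / (x t + a) - μ1 - μ2 * x t)))
            Filter.atTop (nhds (-(-(μ2 * L * ((L - xm) * (L - xp))) / (L + a)))) :=
          (hGtend L hL0 hLt).neg
        have hd : (-(-(μ2 * L * ((L - xm) * (L - xp))) / (L + a))) < 0 := by
          have h2 : 0 < -(μ2 * L * ((L - xm) * (L - xp))) / (L + a) := by
            apply div_pos
            · have h1 : 0 < μ2 * L * ((L - xm) * (xp - L)) :=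
                mul_pos (mul_pos hμ2 (by linarith)) (mul_pos (by linarith) (by linarith))
              nlinarith [h1]
            · have h3 : 0 < L := by linarith
              positivity
          linarith
        have hpos2 : ∀ t : ℝ, 0 ≤ t → 0 ≤ xp - x t := by
          intro t ht
          have := hltp t ht
          linarith
        exact myode_no_neg_limit (fun t => xp - x t) _ _ hder htend hd hpos2
    · -- x 0 = xp : constant
      have hconst : ∀ᶠ t in Filter.atTop, xp = x t := by
        filter_upwards [Filter.eventually_ge_atTop (0:ℝ)] with t ht
        have h := e2 t ht
        rw [hc] at h
        simp at h
        linarith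
      exact Filter.Tendsto.congr' hconst tendsto_const_nhds
    · -- xp < x 0 : decreasing towards xp
      have hgtp : ∀ t, 0 ≤ t → xp < x t := by
        intro t ht
        have h := e2 t ht
        nlinarith [Real.exp_pos (∫ s in (0:ℝ)..t,
          -(μ2 * x (max s 0) * (x (max s 0) - xm)) / (x (max s 0) + a)), h]
      have hv : ∀ t, 0 ≤ t → x t * (b * x t / (x t + a) - μ1 - μ2 * x t) ≤ 0 := by
        intro t ht
        rw [key (x t) (hnn t ht)]
        apply le_of_lt
        apply div_neg_of_neg_of_pos
        · have h1 : 0 < μ2 * x t * ((x t - xm) * (x t - xp)) :=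
            mul_pos (mul_pos hμ2 (by linarith [hgtm t ht]))
              (mul_pos (by linarith [hgtm t ht]) (by linarith [hgtp t ht]))
          nlinarith [h1]
        · have := hnn t ht; positivity
      have hmono := myode_antitoneOn x _ hsol hv
      obtain ⟨L, hLp, hLle, hLt⟩ := myode_tendsto_of_antitone x xp hmono
        (fun t ht => le_of_lt (hgtp t ht))
      rcases eq_or_lt_of_le hLp with h | h
      · rwa [← h] at hLt
      · exfalso
        apply myode_no_neg_limit x _ (-(μ2 * L * ((L - xm) * (L - xp))) / (L + a))
          hsol (hGtend L (le_of_lt (lt_trans hxp h)) hLt) ?_ hnn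
        apply div_neg_of_neg_of_pos
        · have h1 : 0 < μ2 * L * ((L - xm) * (L - xp)) :=
            mul_pos (mul_pos hμ2 (by linarith)) (mul_pos (by linarith) (by linarith))
          nlinarith [h1]
        · have : 0 < L := lt_trans hxp h
          positivity
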